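/- For r = 2, p ≥ 2: the minimum degree of OΓ_n^{(p,2)} equals 1 if n ≤ 2p−1, and equals ⌊n/(2p)⌋ + 1 if n ≥ 2p. -/

import Mathlib

/-- Hamming distance between two binary words (as lists). -/
def hdist (u v : List Bool) : ℕ := (List.zipWith bne u v).count true

/-- `w` is an I-Fibonacci (p,r)-code: no factor `1^(r+1)` and no factor `1 0^s 1` with `s < p`
(equivalently: maximal blocks of 1s have length ≤ r and blocks of 1s are separated by ≥ p zeros). -/
def ICode (p r : ℕ) (w : List Bool) : Prop :=
  ¬ (List.replicate (r + 1) true <:+: w) ∧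
  ∀ s < p, ¬ ((true :: (List.replicate s false ++ [true])) <:+: w)

/-- `w` is an O-Fibonacci (p,r)-code: no factor `(10^(p-1))^r 1` and no factor `1 0^s 1`
with `s ≤ p - 2`. -/
def OCode (p r : ℕ) (w : List Bool) : Prop :=
  ¬ (((List.replicate r (true :: List.replicate (p - 1) false)).flatten ++ [true]) <:+: w) ∧
  ∀ s, s + 2 ≤ p → ¬ ((true :: (List.replicate s false ++ [true])) <:+: w)

/-- Vertex type of the I-Fibonacci (p,r)-cube of dimension n. -/
def IVert (p r n : ℕ) := {w : List Bool // w.length = n ∧ ICode p r w}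

/-- Vertex type of the O-Fibonacci (p,r)-cube of dimension n. -/
def OVert (p r n : ℕ) := {w : List Bool // w.length = n ∧ OCode p r w}

/-- The I-Fibonacci (p,r)-cube: vertices adjacent iff they differ in exactly one coordinate. -/
def IGraph (p r n : ℕ) : SimpleGraph (IVert p r n) :=
  SimpleGraph.fromRel (fun u v => hdist u.1 v.1 = 1)

/-- The O-Fibonacci (p,r)-cube. -/
def OGraph (p r n : ℕ) : SimpleGraph (OVert p r n) :=
  SimpleGraph.fromRel (fun u v => hdist u.1 v.1 = 1)

/-- Eccentricity of a vertex. -/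
noncomputable def ecc {V : Type*} (G : SimpleGraph V) (v : V) : ℕ :=
  sSup {d | ∃ u, G.dist v u = d}

/-- Radius of a graph. -/
noncomputable def grad {V : Type*} (G : SimpleGraph V) : ℕ :=
  sInf {e | ∃ v, ecc G v = e}

/-- Diameter of a graph. -/
noncomputable def gdiam {V : Type*} (G : SimpleGraph V) : ℕ :=
  sSup {d | ∃ u v, G.dist u v = d}

/-- Degree of a vertex (number of neighbours). -/
noncomputable def deg {V : Type*} (G : SimpleGraph V) (v : V) : ℕ :=
  {u | G.Adj v u}.ncard



def bit (w : List Bool) (i : ℕ) : Bool := w.getD i false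

lemma bit_lt {w : List Bool} {i : ℕ} (h : bit w i = true) : i < w.length := by
  by_contra hc
  rw [bit, List.getD_eq_default] at h
  · exact Bool.noConfusion h
  · omega

lemma bit_of_ge {w : List Bool} {i : ℕ} (h : w.length ≤ i) : bit w i = false := by
  by_contra hc
  have := bit_lt (by simpa using hc)
  omega

lemma infix_iff_bits (t w : List Bool) :
    t <:+: w ↔ ∃ k, k + t.length ≤ w.length ∧ ∀ j < t.length, bit w (k + j) = bit t j := by
  constructor
  · rintro ⟨s, u, rfl⟩
    refine ⟨s.length, by simp [List.length_append], fun j hj => ?_⟩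
    rw [bit, bit, List.append_assoc, List.getD_append_right _ _ _ _ (by omega)]
    have : s.length + j - s.length = j := by omega
    rw [this, List.getD_append _ _ _ _ (by omega)]
  · rintro ⟨k, hk, hb⟩
    refine ⟨w.take k, w.drop (k + t.length), ?_⟩
    have hmid : (w.drop k).take t.length = t := by
      apply List.ext_getElem
      · simp; omega
      · intro j h1 h2
        have hj : j < t.length := h2
        have hkj : k + j < w.length := by omega
        have := hb j hj
        rw [bit, bit, List.getD_eq_getElem _ _ hkj, List.getD_eq_getElem _ _ hj] at this
        rw [List.getElem_take, List.getElem_drop]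
        exact this
    calc w.take k ++ t ++ w.drop (k + t.length)
        = w.take k ++ ((w.drop k).take t.length ++ ((w.drop k).drop t.length)) := by
          rw [hmid, List.drop_drop, List.append_assoc]
      _ = w := by rw [List.take_append_drop, List.take_append_drop]

def NoClose (p : ℕ) (w : List Bool) : Prop :=
  ∀ i d, 0 < d → d < p → bit w i = true → bit w (i + d) = true → False

def NoTriple (p : ℕ) (w : List Bool) : Prop :=
  ∀ i, bit w i = true → bit w (i + p) = true → bit w (i + 2 * p) = true → False

def Nice (p : ℕ) (w : List Bool) : Prop := NoClose p w ∧ NoTriple p w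

lemma bit_pat1 (s j : ℕ) (hj : j < s + 2) :
    bit (true :: (List.replicate s false ++ [true])) j = decide (j = 0 ∨ j = s + 1) := by
  rcases j with _ | j
  · simp [bit]
  · rw [bit, List.getD_cons_succ]
    rcases lt_or_ge j s with h | h
    · rw [List.getD_append _ _ _ _ (by simpa using h)]
      simp [List.getD_eq_getElem, List.getElem_replicate, h]
      omega
    · have hj' : j = s := by omega
      subst hj'
      rw [List.getD_append_right _ _ _ _ (by simp)]
      simp

lemma pat2_eq (p : ℕ) :
    ((List.replicate 2 (true :: List.replicate (p - 1) false)).flatten ++ [true])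
      = (true :: List.replicate (p-1) false) ++ ((true :: List.replicate (p-1) false) ++ [true]) := by
  simp

lemma bit_pat2 (p j : ℕ) (hp : 1 ≤ p) (hj : j < 2 * p + 1) :
    bit ((List.replicate 2 (true :: List.replicate (p - 1) false)).flatten ++ [true]) j
      = decide (j = 0 ∨ j = p ∨ j = 2 * p) := by
  rw [pat2_eq]
  have hlen : (true :: List.replicate (p-1) false).length = p := by simp; omega
  rcases lt_or_ge j p with h | h
  · rw [bit, List.getD_append _ _ _ _ (by omega)]
    rcases j with _ | j
    · simp
    · rw [List.getD_cons_succ]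
      have : j < p - 1 := by omega
      rw [List.getD_eq_getElem _ _ (by simpa using this), List.getElem_replicate]
      simp; omega
  · rw [bit, List.getD_append_right _ _ _ _ (by omega), hlen]
    rcases lt_or_ge j (2 * p) with h2 | h2
    · rw [List.getD_append _ _ _ _ (by simp; omega)]
      rcases Nat.exists_eq_add_of_le h with ⟨j', rfl⟩
      rcases j' with _ | j'
      · simp
      · rw [show p + (j' + 1) - p = j' + 1 by omega, List.getD_cons_succ]
        have : j' < p - 1 := by omega
        rw [List.getD_eq_getElem _ _ (by simpa using this), List.getElem_replicate]
        simp; omega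
    · have : j = 2 * p := by omega
      subst this
      rw [List.getD_append_right _ _ _ _ (by rw [hlen]; omega)]
      simp [show 2 * p - p - (p - 1 + 1) = 0 by omega]

lemma pat2_len (p : ℕ) (hp : 1 ≤ p) :
    ((List.replicate 2 (true :: List.replicate (p - 1) false)).flatten ++ [true]).length = 2 * p + 1 := by
  rw [pat2_eq]; simp; omega

lemma ocode_iff_nice (p : ℕ) (hp : 2 ≤ p) (w : List Bool) : OCode p 2 w ↔ Nice p w := by
  constructor
  · rintro ⟨h1, h2⟩
    have hnc : NoClose p w := by
      intro i d hd1 hd2 hbi hbd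
      induction d using Nat.strong_induction_on generalizing i with
      | _ d IH =>
        by_cases hmid : ∃ e, 0 < e ∧ e < d ∧ bit w (i + e) = true
        · obtain ⟨e, he1, he2, he3⟩ := hmid
          exact IH (d - e) (by omega) (i + e) (by omega) (by omega) he3
            (by rw [show i + e + (d - e) = i + d by omega]; exact hbd)
        · push_neg at hmid
          refine h2 (d - 1) (by omega) ?_
          rw [infix_iff_bits]
          refine ⟨i, ?_, ?_⟩
          · have := bit_lt hbd
            simp; omega
          · intro j hj
            have hjlen : j < (d - 1) + 2 := by simp at hj; omega
            rw [bit_pat1 _ _ hjlen]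
            rcases Nat.eq_zero_or_pos j with rfl | hj0
            · simpa using hbi
            · rcases eq_or_lt_of_le (show j ≤ d by omega) with hjd' | hjd
              · rw [show i + j = i + d by omega, hbd]
                simp; omega
              · have := hmid j hj0 hjd
                simp [this]; omega
    refine ⟨hnc, ?_⟩
    intro i hb0 hb1 hb2
    apply h1
    rw [infix_iff_bits]
    refine ⟨i, ?_, ?_⟩
    · have := bit_lt hb2
      rw [pat2_len p (by omega)]; omega
    · intro j hj
      rw [pat2_len p (by omega)] at hj
      rw [bit_pat2 p j (by omega) hj]
      rcases Nat.eq_zero_or_pos j with rfl | hj0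
      · simpa using hb0
      · rcases lt_trichotomy j p with hlt | rfl | hgt
        · have : bit w (i + j) = false := by
            by_contra hc
            exact hnc i j hj0 hlt hb0 (by simpa using hc)
          simp [this]; omega
        · simp [hb1]
        · rcases eq_or_lt_of_le (show j ≤ 2 * p by omega) with rfl | hlt2
          · simp [hb2]
          · have : bit w (i + j) = false := by
              by_contra hc
              exact hnc (i + p) (j - p) (by omega) (by omega) hb1
                (by rw [show i + p + (j - p) = i + j by omega]; simpa using hc)
            simp [this]; omega
  · rintro ⟨hnc, hnt⟩
    constructor
    · intro hin
      rw [infix_iff_bits] at hin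
      obtain ⟨k, hk, hb⟩ := hin
      rw [pat2_len p (by omega)] at hk hb
      have b0 := hb 0 (by omega)
      have bp := hb p (by omega)
      have b2p := hb (2 * p) (by omega)
      rw [bit_pat2 p 0 (by omega) (by omega)] at b0
      rw [bit_pat2 p p (by omega) (by omega)] at bp
      rw [bit_pat2 p (2*p) (by omega) (by omega)] at b2p
      simp at b0 bp b2p
      exact hnt k (by simpa using b0) bp b2p
    · intro s hs hin
      rw [infix_iff_bits] at hin
      obtain ⟨k, hk, hb⟩ := hin
      have hlen : (true :: (List.replicate s false ++ [true])).length = s + 2 := by simp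
      rw [hlen] at hk hb
      have b0 := hb 0 (by omega)
      have bs := hb (s + 1) (by omega)
      rw [bit_pat1 s 0 (by omega)] at b0
      rw [bit_pat1 s (s+1) (by omega)] at bs
      simp at b0 bs
      exact hnc k (s + 1) (by omega) (by omega) (by simpa using b0) bs


def bflip (w : List Bool) (i : ℕ) : List Bool := w.set i (!bit w i)

lemma flip_length (w : List Bool) (i : ℕ) : (bflip w i).length = w.length := by
  simp [bflip]

lemma bit_flip {w : List Bool} {i : ℕ} (hi : i < w.length) (x : ℕ) :
    bit (bflip w i) x = if x = i then !bit w i else bit w x := by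
  rcases lt_or_ge x w.length with hx | hx
  · rw [bit, bflip, List.getD_eq_getElem _ _ (by simpa using hx), List.getElem_set]
    split
    · next h => simp [h, bit, List.getD_eq_getElem _ _ hi]
    · next h =>
      split
      · next h2 => omega
      · exact (List.getD_eq_getElem w false hx).symm
  · rw [bit_of_ge (by simpa [bflip] using hx), bit_of_ge hx]
    split
    · omega
    · rfl

lemma bit_flip_self {w : List Bool} {i : ℕ} (hi : i < w.length) :
    bit (bflip w i) i = !bit w i := by
  rw [bit_flip hi]; simp

lemma bit_flip_ne {w : List Bool} {i : ℕ} (hi : i < w.length) {x : ℕ} (h : x ≠ i) :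
    bit (bflip w i) x = bit w x := by
  rw [bit_flip hi]; simp [h]

lemma bit_drop (w : List Bool) (c j : ℕ) : bit (w.drop c) j = bit w (c + j) := by
  rcases lt_or_ge (c + j) w.length with h | h
  · rw [bit, bit, List.getD_eq_getElem _ _ (by simp; omega), List.getD_eq_getElem _ _ h,
      List.getElem_drop]
  · rw [bit_of_ge (by simp; omega), bit_of_ge h]

lemma nice_drop {p : ℕ} {w : List Bool} (h : Nice p w) (c : ℕ) : Nice p (w.drop c) := by
  refine ⟨fun i d hd1 hd2 h1 h2 => ?_, fun i h1 h2 h3 => ?_⟩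
  · rw [bit_drop] at h1 h2
    exact h.1 (c + i) d hd1 hd2 h1 (by rw [show c + i + d = c + (i + d) by omega]; exact h2)
  · rw [bit_drop] at h1 h2 h3
    exact h.2 (c + i) h1 (by rw [show c + i + p = c + (i + p) by omega]; exact h2)
      (by rw [show c + i + 2 * p = c + (i + 2 * p) by omega]; exact h3)

lemma nice_flip_one {p : ℕ} {w : List Bool} {i : ℕ} (hw : Nice p w)
    (h1 : bit w i = true) : Nice p (bflip w i) := by
  have hi : i < w.length := bit_lt h1
  have key : ∀ x, bit (bflip w i) x = true → bit w x = true := by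
    intro x hx
    rcases eq_or_ne x i with rfl | hne
    · rw [bit_flip_self hi, h1] at hx; exact absurd hx (by simp)
    · rwa [bit_flip_ne hi hne] at hx
  exact ⟨fun a d hd1 hd2 ha hb => hw.1 a d hd1 hd2 (key _ ha) (key _ hb),
    fun a h1' h2' h3' => hw.2 a (key _ h1') (key _ h2') (key _ h3')⟩

lemma nice_flip_zero {p : ℕ} {w : List Bool} {i : ℕ} (hp : 0 < p) (hw : Nice p w)
    (h0 : bit w i = false) (hi : i < w.length)
    (hfar : ∀ j, bit w j = true → i + p ≤ j ∨ j + p ≤ i)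
    (ht1 : ¬(bit w (i + p) = true ∧ bit w (i + 2 * p) = true))
    (ht2 : ∀ x, x + p = i → ¬(bit w x = true ∧ bit w (i + p) = true))
    (ht3 : ∀ x, x + 2 * p = i → ¬(bit w x = true ∧ bit w (x + p) = true)) :
    Nice p (bflip w i) := by
  have key : ∀ x, bit (bflip w i) x = true → x = i ∨ bit w x = true := by
    intro x hx
    rcases eq_or_ne x i with rfl | hne
    · exact Or.inl rfl
    · exact Or.inr (by rwa [bit_flip_ne hi hne] at hx)
  constructor
  · intro a d hd1 hd2 ha hb
    rcases key a ha with rfl | ha'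
    · rcases key (a + d) hb with he | hb'
      · omega
      · rcases hfar _ hb' with h | h <;> omega
    · rcases key (a + d) hb with he | hb'
      · rcases hfar _ ha' with h | h <;> omega
      · exact hw.1 a d hd1 hd2 ha' hb'
  · intro a h1 h2 h3
    rcases key a h1 with rfl | ha'
    · rcases key (a + p) h2 with he | hb'
      · omega
      · rcases key (a + 2 * p) h3 with he | hc'
        · omega
        · exact ht1 ⟨hb', hc'⟩
    · rcases key (a + p) h2 with he | hb'
      · rcases key (a + 2 * p) h3 with he' | hc'
        · omega
        · exact ht2 a he ⟨ha', by rw [show i + p = a + 2 * p by omega]; exact hc'⟩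
      · rcases key (a + 2 * p) h3 with he' | hc'
        · exact ht3 a he' ⟨ha', hb'⟩
        · exact hw.2 a ha' hb' hc'

noncomputable def flipset (p : ℕ) (w : List Bool) : Finset ℕ :=
  @Finset.filter _ (fun i => Nice p (bflip w i)) (Classical.decPred _) (Finset.range w.length)

lemma mem_flipset {p : ℕ} {w : List Bool} {i : ℕ} :
    i ∈ flipset p w ↔ i < w.length ∧ Nice p (bflip w i) := by
  simp [flipset, Finset.mem_filter, Finset.mem_range, and_comm]

lemma interface {p c : ℕ} {w : List Bool} (hp : 0 < p) (hw : Nice p w) (hpc : p ≤ c)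
    (hz : ∀ i, c - p ≤ i → i < c → bit w i = false)
    {j : ℕ} (hjl : j < (w.drop c).length) (hj : Nice p (bflip (w.drop c) j)) :
    Nice p (bflip w (c + j)) := by
  set v := w.drop c with hv
  have hvl : v.length = w.length - c := by simp [hv]
  have hcl : c + j < w.length := by omega
  rcases Bool.eq_false_or_eq_true (bit w (c + j)) with h1 | h1
  · exact nice_flip_one hw h1
  -- addition case
  have hbv : bit v j = false := by rw [bit_drop]; exact h1
  have keyv : ∀ z, bit (bflip w (c + j)) (c + z) = bit (bflip v j) z := by
    intro z
    rcases eq_or_ne z j with rfl | hne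
    · rw [bit_flip_self hcl, bit_flip_self (by omega), bit_drop]
    · rw [bit_flip_ne hcl (by omega), bit_flip_ne (by omega) hne, bit_drop]
  have key : ∀ x, bit (bflip w (c + j)) x = true → x = c + j ∨ bit w x = true := by
    intro x hx
    rcases eq_or_ne x (c + j) with rfl | hne
    · exact Or.inl rfl
    · exact Or.inr (by rwa [bit_flip_ne hcl hne] at hx)
  have hwone : ∀ x, bit w x = true → x < c → x + p < c := by
    intro x hx hxc
    by_contra hcon
    rw [hz x (by omega) hxc] at hx
    exact Bool.noConfusion hx
  constructor
  · intro a d hd1 hd2 ha hb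
    rcases key a ha with rfl | ha'
    · -- a = c + j, other = c + j + d
      rcases key (c + j + d) hb with he | hb'
      · omega
      · have : bit v (j + d) = true := by rw [bit_drop, show c + (j + d) = c + j + d by omega]; exact hb'
        exact hj.1 j d hd1 hd2 (by rw [bit_flip_self (by omega), hbv]; rfl)
          (by rw [bit_flip_ne (by omega) (by omega)]; exact this)
    · rcases key (a + d) hb with he | hb'
      · -- a + d = c + j, a is a w-one
        rcases lt_or_ge a c with hac | hac
        · have := hwone a ha' hac
          omega
        · obtain ⟨y, rfl⟩ := Nat.exists_eq_add_of_le hac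
          have hyd : y + d = j := by omega
          have : bit v y = true := by rw [bit_drop]; exact ha'
          exact hj.1 y d hd1 hd2 (by rw [bit_flip_ne (by omega) (by omega)]; exact this)
            (by rw [hyd, bit_flip_self (by omega), hbv]; rfl)
      · exact hw.1 a d hd1 hd2 ha' hb'
  · intro a h1' h2' h3'
    -- show a ≥ c
    have hac : c ≤ a := by
      by_contra hcon
      push_neg at hcon
      have ha' : bit w a = true := by
        rcases key a h1' with he | h; · omega
        exact h
      have hstep1 := hwone a ha' hcon
      have hb' : bit w (a + p) = true := by
        rcases key (a + p) h2' with he | h; · omega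
        exact h
      have hstep2 := hwone (a + p) hb' (by omega)
      have hc' : bit w (a + 2 * p) = true := by
        rcases key (a + 2 * p) h3' with he | h; · omega
        exact h
      have := bit_lt hc'
      -- all three < c, so triple in w
      exact hw.2 a ha' hb' hc'
    obtain ⟨y, rfl⟩ := Nat.exists_eq_add_of_le hac
    have e1 : bit (bflip v j) y = true := by rw [← keyv]; exact h1'
    have e2 : bit (bflip v j) (y + p) = true := by
      rw [← keyv, show c + (y + p) = c + y + p by omega]; exact h2'
    have e3 : bit (bflip v j) (y + 2 * p) = true := by
      rw [← keyv, show c + (y + 2 * p) = c + y + 2 * p by omega]; exact h3'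
    exact hj.2 y e1 e2 e3

lemma step_card {p c : ℕ} {w : List Bool} (hp : 0 < p) (hw : Nice p w) (hpc : p ≤ c)
    (hcn : c ≤ w.length)
    (hz : ∀ i, c - p ≤ i → i < c → bit w i = false)
    (extras : Finset ℕ) (he : ∀ i ∈ extras, i < c ∧ Nice p (bflip w i)) :
    extras.card + (flipset p (w.drop c)).card ≤ (flipset p w).card := by
  classical
  have hsub : extras ∪ (flipset p (w.drop c)).image (fun j => c + j) ⊆ flipset p w := by
    intro x hx
    rcases Finset.mem_union.1 hx with hx | hx
    · obtain ⟨h1, h2⟩ := he x hx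
      exact mem_flipset.2 ⟨by omega, h2⟩
    · obtain ⟨j, hj, rfl⟩ := Finset.mem_image.1 hx
      obtain ⟨hjl, hjn⟩ := mem_flipset.1 hj
      refine mem_flipset.2 ⟨by simp at hjl; omega, interface hp hw hpc hz hjl hjn⟩
  have hdisj : Disjoint extras ((flipset p (w.drop c)).image (fun j => c + j)) := by
    rw [Finset.disjoint_left]
    intro x hx hx2
    obtain ⟨j, hj, rfl⟩ := Finset.mem_image.1 hx2
    have := (he _ hx).1
    omega
  calc extras.card + (flipset p (w.drop c)).card
      = (extras ∪ (flipset p (w.drop c)).image (fun j => c + j)).card := by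
        rw [Finset.card_union_of_disjoint hdisj,
          Finset.card_image_of_injective _ (fun a b h => by omega)]
    _ ≤ (flipset p w).card := Finset.card_le_card hsub


lemma ones_flippable {p : ℕ} {w : List Bool} (hw : Nice p w) {i : ℕ} (h : bit w i = true) :
    i ∈ flipset p w :=
  mem_flipset.2 ⟨bit_lt h, nice_flip_one hw h⟩

lemma div_helper1 {a b k : ℕ} (hk : 0 < k) (h : a ≤ b + k) : a / k ≤ b / k + 1 := by
  calc a / k ≤ (b + k) / k := Nat.div_le_div_right h
    _ = b / k + 1 := Nat.add_div_right _ hk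

lemma div_helper2 {a b k : ℕ} (hk : 0 < k) (h : a ≤ b + k + k) : a / k ≤ b / k + 2 := by
  calc a / k ≤ (b + k + k) / k := Nat.div_le_div_right h
    _ = b / k + 2 := by rw [Nat.add_div_right _ hk, Nat.add_div_right _ hk]

lemma my_div_eq_one {n k : ℕ} (hk : 0 < k) (h1 : k ≤ n) (h2 : n < 2 * k) : n / k = 1 := by
  apply le_antisymm
  · by_contra hc
    push_neg at hc
    have h3 : 2 ≤ n / k := hc
    have := (Nat.le_div_iff_mul_le hk).1 h3
    omega
  · exact (Nat.le_div_iff_mul_le hk).2 (by omega)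

lemma lower_main (p : ℕ) (hp : 2 ≤ p) :
    ∀ n : ℕ, ∀ w : List Bool, w.length = n → 1 ≤ n → Nice p w →
      n / (2 * p) + 1 ≤ (flipset p w).card := by
  intro n
  induction n using Nat.strong_induction_on with
  | _ n IH =>
  intro w hlen hn hw
  have hp0 : 0 < p := by omega
  have h2p0 : 0 < 2 * p := by omega
  rcases lt_or_ge n (2 * p) with hsmall | hbig
  · -- small case : just need one flip
    rw [Nat.div_eq_of_lt hsmall]
    have hne : (flipset p w).Nonempty := by
      by_cases hone : ∃ i, bit w i = true
      · obtain ⟨i, hi⟩ := hone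
        exact ⟨i, ones_flippable hw hi⟩
      · push_neg at hone
        have hall : ∀ i, bit w i = false := fun i => by simpa using hone i
        refine ⟨0, mem_flipset.2 ⟨by omega, nice_flip_zero hp0 hw (hall 0) (by omega)
          (fun j hj => by rw [hall j] at hj; exact Bool.noConfusion hj)
          (fun h => by rw [hall] at h; exact Bool.noConfusion h.1)
          (fun x _ h => by rw [hall] at h; exact Bool.noConfusion h.1)
          (fun x _ h => by rw [hall] at h; exact Bool.noConfusion h.1)⟩⟩
    have := Finset.Nonempty.card_pos hne
    omega
  · -- big case
    by_cases hq : ∃ i, i < p ∧ bit w i = true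
    · obtain ⟨q, hqp, hq1⟩ := hq
      have hzero1 : ∀ d, 0 < d → d < p → bit w (q + d) = false := fun d hd1 hd2 => by
        by_contra hc
        exact hw.1 q d hd1 hd2 hq1 (by simpa using hc)
      by_cases h2 : bit w (q + p) = true
      · -- case 2b : ones at q and q+p
        have hzero2 : ∀ i, q + p + 1 ≤ i → i ≤ q + 2 * p → bit w i = false := by
          intro i ha hb
          by_contra hc
          have hc' : bit w i = true := by simpa using hc
          rcases eq_or_lt_of_le hb with heq | hlt
          · exact hw.2 q hq1 h2 (heq ▸ hc')
          · exact hw.1 (q + p) (i - (q + p)) (by omega) (by omega) h2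
              (by rw [show q + p + (i - (q + p)) = i by omega]; exact hc')
        rcases lt_or_ge (q + 2 * p + 1) n with hcn | hcn
        · have hstep := step_card (c := q + 2 * p + 1) hp0 hw (by omega) (by omega)
            (fun i hi1 hi2 => hzero2 i (by omega) (by omega)) {q, q + p}
            (by
              intro i hi
              simp only [Finset.mem_insert, Finset.mem_singleton] at hi
              rcases hi with rfl | rfl
              · exact ⟨by omega, nice_flip_one hw hq1⟩
              · exact ⟨by omega, nice_flip_one hw h2⟩)
          have hcard2 : ({q, q + p} : Finset ℕ).card = 2 := Finset.card_pair (by omega)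
          have hvlen : (w.drop (q + 2 * p + 1)).length = n - (q + 2 * p + 1) := by
            simp [hlen]
          have hIH := IH (n - (q + 2 * p + 1)) (by omega) _ hvlen (by omega) (nice_drop hw _)
          have harith : n / (2 * p) ≤ (n - (q + 2 * p + 1)) / (2 * p) + 2 :=
            div_helper2 h2p0 (by omega)
          omega
        · -- n ≤ q + 2p + 1 ≤ 3p : n/(2p) = 1, two flips suffice
          have hdiv : n / (2 * p) = 1 := my_div_eq_one h2p0 hbig (by omega)
          have hsub : ({q, q + p} : Finset ℕ) ⊆ flipset p w := by
            intro i hi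
            simp only [Finset.mem_insert, Finset.mem_singleton] at hi
            rcases hi with rfl | rfl
            · exact ones_flippable hw hq1
            · exact ones_flippable hw h2
          have hcard := Finset.card_le_card hsub
          have hcard2 : ({q, q + p} : Finset ℕ).card = 2 := Finset.card_pair (by omega)
          omega
      · -- case 2a : one at q, zeros on (q, q+p]
        have h2' : bit w (q + p) = false := by simpa using h2
        have hzero2 : ∀ i, q + 1 ≤ i → i ≤ q + p → bit w i = false := by
          intro i ha hb
          rcases eq_or_lt_of_le hb with heq | hlt
          · exact heq ▸ h2'
          · have := hzero1 (i - q) (by omega) (by omega)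
            rwa [show q + (i - q) = i by omega] at this
        rcases lt_or_ge (q + p + 1) n with hcn | hcn
        · have hstep := step_card (c := q + p + 1) hp0 hw (by omega) (by omega)
            (fun i hi1 hi2 => hzero2 i (by omega) (by omega)) {q}
            (by
              intro i hi
              simp only [Finset.mem_singleton] at hi
              subst hi
              exact ⟨by omega, nice_flip_one hw hq1⟩)
          have hvlen : (w.drop (q + p + 1)).length = n - (q + p + 1) := by simp [hlen]
          have hIH := IH (n - (q + p + 1)) (by omega) _ hvlen (by omega) (nice_drop hw _)
          have harith : n / (2 * p) ≤ (n - (q + p + 1)) / (2 * p) + 1 :=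
            div_helper1 h2p0 (by omega)
          simp only [Finset.card_singleton] at hstep
          omega
        · -- n = 2p exactly, q = p - 1; flips q and q + p
          have hn2 : n = 2 * p := by omega
          have hq' : q = p - 1 := by omega
          have hdiv : n / (2 * p) = 1 := my_div_eq_one h2p0 hbig (by omega)
          have haddable : Nice p (bflip w (q + p)) := by
            refine nice_flip_zero hp0 hw h2' (by omega) ?_ ?_ ?_ ?_
            · intro j hj
              have hjl := bit_lt hj
              rcases lt_trichotomy j q with hlt | rfl | hgt
              · exact absurd (hw.1 j (q - j) (by omega) (by omega) hj
                  (by rw [show j + (q - j) = q by omega]; exact hq1)) not_false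
              · right; omega
              · have := hzero2 j (by omega) (by omega)
                rw [this] at hj
                exact Bool.noConfusion hj
            · rintro ⟨hA, hB⟩
              have := bit_lt hA
              omega
            · rintro x hx ⟨hA, hB⟩
              have := bit_lt hB
              omega
            · intro x hx
              exact absurd hx (by omega)
          have hsub : ({q, q + p} : Finset ℕ) ⊆ flipset p w := by
            intro i hi
            simp only [Finset.mem_insert, Finset.mem_singleton] at hi
            rcases hi with rfl | rfl
            · exact ones_flippable hw hq1
            · exact mem_flipset.2 ⟨by omega, haddable⟩
          have hcard := Finset.card_le_card hsub
          have hcard2 : ({q, q + p} : Finset ℕ).card = 2 := Finset.card_pair (by omega)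
          omega
    · -- case 1 : no ones below p
      push_neg at hq
      have hz0 : ∀ i, i < p → bit w i = false := fun i h => by simpa using hq i h
      by_cases h2 : bit w p = true ∧ bit w (2 * p) = true
      · -- case 1b : ones at p and 2p
        obtain ⟨hb1, hb2⟩ := h2
        have hzero2 : ∀ i, 2 * p + 1 ≤ i → i ≤ 3 * p → bit w i = false := by
          intro i ha hb
          by_contra hc
          have hc' : bit w i = true := by simpa using hc
          rcases eq_or_lt_of_le hb with heq | hlt
          · exact hw.2 p hb1 (by rw [show p + p = 2 * p by ring]; exact hb2)
              (by rw [show p + 2 * p = 3 * p by ring, ← heq]; exact hc')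
          · exact hw.1 (2 * p) (i - 2 * p) (by omega) (by omega) hb2
              (by rw [show 2 * p + (i - 2 * p) = i by omega]; exact hc')
        rcases lt_or_ge (3 * p + 1) n with hcn | hcn
        · have hstep := step_card (c := 3 * p + 1) hp0 hw (by omega) (by omega)
            (fun i hi1 hi2 => hzero2 i (by omega) (by omega)) {p, 2 * p}
            (by
              intro i hi
              simp only [Finset.mem_insert, Finset.mem_singleton] at hi
              rcases hi with rfl | rfl
              · exact ⟨by omega, nice_flip_one hw hb1⟩
              · exact ⟨by omega, nice_flip_one hw hb2⟩)
          have hcard2 : ({p, 2 * p} : Finset ℕ).card = 2 := Finset.card_pair (by omega)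
          have hvlen : (w.drop (3 * p + 1)).length = n - (3 * p + 1) := by simp [hlen]
          have hIH := IH (n - (3 * p + 1)) (by omega) _ hvlen (by omega) (nice_drop hw _)
          have harith : n / (2 * p) ≤ (n - (3 * p + 1)) / (2 * p) + 2 :=
            div_helper2 h2p0 (by omega)
          omega
        · have hdiv : n / (2 * p) = 1 := my_div_eq_one h2p0 hbig (by omega)
          have hsub : ({p, 2 * p} : Finset ℕ) ⊆ flipset p w := by
            intro i hi
            simp only [Finset.mem_insert, Finset.mem_singleton] at hi
            rcases hi with rfl | rfl
            · exact ones_flippable hw hb1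
            · exact ones_flippable hw hb2
          have hcard := Finset.card_le_card hsub
          have hcard2 : ({p, 2 * p} : Finset ℕ).card = 2 := Finset.card_pair (by omega)
          omega
      · -- case 1a : position 0 is addable, cut at p
        have haddable : Nice p (bflip w 0) := by
          refine nice_flip_zero hp0 hw (hz0 0 hp0) (by omega) ?_ ?_ ?_ ?_
          · intro j hj
            left
            by_contra hcon
            push_neg at hcon
            have := hz0 j (by omega)
            rw [this] at hj
            exact Bool.noConfusion hj
          · intro hcon
            refine h2 ⟨?_, ?_⟩
            · have := hcon.1; rwa [show 0 + p = p by omega] at this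
            · have := hcon.2; rwa [show 0 + 2 * p = 2 * p by omega] at this
          · intro x hx
            exact absurd hx (by omega)
          · intro x hx
            exact absurd hx (by omega)
        have hstep := step_card (c := p) hp0 hw (by omega) (by omega)
          (fun i hi1 hi2 => hz0 i (by omega)) {0}
          (by
            intro i hi
            simp only [Finset.mem_singleton] at hi
            subst hi
            exact ⟨by omega, haddable⟩)
        have hvlen : (w.drop p).length = n - p := by simp [hlen]
        have hIH := IH (n - p) (by omega) _ hvlen (by omega) (nice_drop hw _)
        have harith : n / (2 * p) ≤ (n - p) / (2 * p) + 1 := div_helper1 h2p0 (by omega)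
        simp only [Finset.card_singleton] at hstep
        omega


lemma hdist_cons (a b : Bool) (u v : List Bool) :
    hdist (a :: u) (b :: v) = hdist u v + (if a = b then 0 else 1) := by
  simp only [hdist, List.zipWith_cons_cons, List.count_cons]
  cases a <;> cases b <;> simp

lemma hdist_self (w : List Bool) : hdist w w = 0 := by
  induction w with
  | nil => rfl
  | cons a w ih => rw [hdist_cons, ih]; simp

lemma hdist_comm (u v : List Bool) : hdist u v = hdist v u := by
  induction u generalizing v with
  | nil => cases v <;> rfl
  | cons a u ih =>
    cases v with
    | nil => rfl
    | cons b v =>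
      rw [hdist_cons, hdist_cons, ih]
      cases a <;> cases b <;> simp

lemma hdist_zero {u v : List Bool} (hlen : u.length = v.length) (h : hdist u v = 0) : u = v := by
  induction u generalizing v with
  | nil => cases v with
    | nil => rfl
    | cons b v => simp at hlen
  | cons a u ih =>
    cases v with
    | nil => simp at hlen
    | cons b v =>
      rw [hdist_cons] at h
      have hab : a = b := by by_contra hc; rw [if_neg hc] at h; omega
      rw [if_pos hab] at h
      simp at hlen
      rw [hab, ih hlen (by omega)]

lemma bflip_cons_zero (a : Bool) (w : List Bool) : bflip (a :: w) 0 = (!a) :: w := by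
  simp [bflip, bit]

lemma bflip_cons_succ (a : Bool) (w : List Bool) (i : ℕ) :
    bflip (a :: w) (i + 1) = a :: bflip w i := by
  simp [bflip, bit]

lemma hdist_flip {w : List Bool} {i : ℕ} (hi : i < w.length) : hdist w (bflip w i) = 1 := by
  induction w generalizing i with
  | nil => simp at hi
  | cons a w ih =>
    rcases i with _ | i
    · rw [bflip_cons_zero, hdist_cons, hdist_self]
      cases a <;> simp
    · rw [bflip_cons_succ, hdist_cons, ih (by simpa using hi)]
      simp

lemma hdist_one {u v : List Bool} (hlen : u.length = v.length) (h : hdist u v = 1) :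
    ∃ i, i < u.length ∧ v = bflip u i := by
  induction u generalizing v with
  | nil =>
    cases v with
    | nil => simp [hdist] at h
    | cons b v => simp at hlen
  | cons a u ih =>
    cases v with
    | nil => simp at hlen
    | cons b v =>
      rw [hdist_cons] at h
      simp at hlen
      by_cases hab : a = b
      · rw [if_pos hab] at h
        obtain ⟨i, hi, rfl⟩ := ih hlen (by omega)
        exact ⟨i + 1, by simpa using hi, by rw [bflip_cons_succ, hab]⟩
      · rw [if_neg hab] at h
        have h0 : hdist u v = 0 := by omega
        have := hdist_zero hlen h0
        subst this
        refine ⟨0, by simp, ?_⟩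
        rw [bflip_cons_zero]
        cases a <;> cases b <;> simp_all

lemma deg_eq_flipset (p n : ℕ) (hp : 2 ≤ p) (v : OVert p 2 n) :
    deg (OGraph p 2 n) v = (flipset p v.1).card := by
  have hn : v.1.length = n := v.2.1
  have himg : Subtype.val '' {u : OVert p 2 n | (OGraph p 2 n).Adj v u}
      = (fun i => bflip v.1 i) '' ↑(flipset p v.1) := by
    ext x
    constructor
    · rintro ⟨u, hu, rfl⟩
      have hadj := hu
      simp only [Set.mem_setOf_eq, OGraph, SimpleGraph.fromRel_adj] at hadj
      obtain ⟨hne, hd⟩ := hadj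
      have hd1 : hdist v.1 u.1 = 1 := by
        rcases hd with h | h
        · exact h
        · rw [hdist_comm]; exact h
      obtain ⟨i, hi, hiu⟩ := hdist_one (by rw [hn, u.2.1]) hd1
      exact ⟨i, by
        rw [Finset.mem_coe, mem_flipset]
        exact ⟨hi, by rw [← hiu]; exact (ocode_iff_nice p hp _).1 u.2.2⟩, hiu.symm⟩
    · rintro ⟨i, hi, rfl⟩
      rw [Finset.mem_coe, mem_flipset] at hi
      obtain ⟨hil, hin⟩ := hi
      refine ⟨⟨bflip v.1 i, by rw [flip_length, hn], (ocode_iff_nice p hp _).2 hin⟩, ?_, rfl⟩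
      simp only [Set.mem_setOf_eq, OGraph, SimpleGraph.fromRel_adj]
      constructor
      · intro hcon
        have heq : v.1 = bflip v.1 i := congrArg Subtype.val hcon
        have hb := congrArg (fun w => bit w i) heq
        rw [bit_flip_self hil] at hb
        simp at hb
      · left
        exact hdist_flip hil
  have hinj2 : Set.InjOn (fun i => bflip v.1 i) ↑(flipset p v.1) := by
    intro a ha b hb hab
    by_contra hne
    rw [Finset.mem_coe, mem_flipset] at ha hb
    have h1 := congrArg (fun w => bit w a) hab
    simp only at h1
    rw [bit_flip_self ha.1, bit_flip_ne hb.1 (Ne.symm ?_)] at h1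
    · simp at h1
    · exact fun hc => hne hc.symm
  calc deg (OGraph p 2 n) v
      = {u : OVert p 2 n | (OGraph p 2 n).Adj v u}.ncard := rfl
    _ = (Subtype.val '' {u : OVert p 2 n | (OGraph p 2 n).Adj v u}).ncard :=
        (Set.ncard_image_of_injective _ Subtype.val_injective).symm
    _ = ((fun i => bflip v.1 i) '' ↑(flipset p v.1)).ncard := by rw [himg]
    _ = (↑(flipset p v.1) : Set ℕ).ncard := Set.ncard_image_of_injOn hinj2
    _ = (flipset p v.1).card := Set.ncard_coe_finset _


lemma not_nice_close {p : ℕ} {w : List Bool} {i j d : ℕ} (hi : i < w.length)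
    (h0 : bit w i = false) (hone : bit w j = true)
    (hd : j = i + d ∨ i = j + d) (hd1 : 0 < d) (hd2 : d < p) : ¬ Nice p (bflip w i) := by
  intro hn
  rcases hd with rfl | rfl
  · exact hn.1 i d hd1 hd2 (by rw [bit_flip_self hi, h0]; rfl)
      (by rw [bit_flip_ne hi (by omega)]; exact hone)
  · exact hn.1 j d hd1 hd2 (by rw [bit_flip_ne hi (by omega)]; exact hone)
      (by rw [bit_flip_self hi, h0]; rfl)

lemma not_nice_triple {p : ℕ} {w : List Bool} {i x : ℕ} (hi : i < w.length)
    (h0 : bit w i = false) (hp : 0 < p)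
    (hcase : (x = i ∧ bit w (i + p) = true ∧ bit w (i + 2 * p) = true)
           ∨ (x + p = i ∧ bit w x = true ∧ bit w (i + p) = true)
           ∨ (x + 2 * p = i ∧ bit w x = true ∧ bit w (x + p) = true)) :
    ¬ Nice p (bflip w i) := by
  intro hn
  have hself : bit (bflip w i) i = true := by rw [bit_flip_self hi, h0]; rfl
  rcases hcase with ⟨rfl, h1, h2⟩ | ⟨he, h1, h2⟩ | ⟨he, h1, h2⟩
  · exact hn.2 x hself (by rw [bit_flip_ne hi (by omega)]; exact h1)
      (by rw [bit_flip_ne hi (by omega)]; exact h2)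
  · exact hn.2 x (by rw [bit_flip_ne hi (by omega)]; exact h1)
      (by rw [he]; exact hself)
      (by rw [show x + 2 * p = i + p by omega, bit_flip_ne hi (by omega)]; exact h2)
  · exact hn.2 x (by rw [bit_flip_ne hi (by omega)]; exact h1)
      (by rw [bit_flip_ne hi (by omega)]; exact h2)
      (by rw [he]; exact hself)

def wordOf (n : ℕ) (S : Finset ℕ) : List Bool :=
  List.ofFn (fun i : Fin n => decide ((i : ℕ) ∈ S))

lemma wordOf_length (n : ℕ) (S : Finset ℕ) : (wordOf n S).length = n := by simp [wordOf]

lemma bit_wordOf {n : ℕ} {S : Finset ℕ} {i : ℕ} (h : i < n) :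
    bit (wordOf n S) i = decide (i ∈ S) := by
  rw [bit, List.getD_eq_getElem _ _ (by rw [wordOf_length]; exact h)]
  simp [wordOf]

lemma bit_wordOf_iff {n : ℕ} {S : Finset ℕ} {i : ℕ} :
    bit (wordOf n S) i = true ↔ i ∈ S ∧ i < n := by
  constructor
  · intro h
    have hl : i < n := by have := bit_lt h; rwa [wordOf_length] at this
    rw [bit_wordOf hl] at h
    exact ⟨by simpa using h, hl⟩
  · rintro ⟨h1, h2⟩
    rw [bit_wordOf h2]
    simpa using h1


lemma small_exists (p n : ℕ) (hp : 2 ≤ p) (hn : 1 ≤ n) (hsmall : n ≤ 2 * p - 1) :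
    ∃ v : OVert p 2 n, deg (OGraph p 2 n) v = 1 := by
  set q := min n p - 1 with hqdef
  have hqn : q < n := by omega
  have hqp : q < p := by omega
  have hright : ∀ i, i < n → q < i → i - q < p := by
    intro i h1 h2
    rcases le_or_gt n p with h | h
    · omega
    · omega
  set w := wordOf n {q} with hwdef
  have hbit : ∀ i, bit w i = true ↔ i = q ∧ i < n := by
    intro i
    rw [hwdef, bit_wordOf_iff]
    simp
  have hnice : Nice p w := by
    constructor
    · intro i d hd1 hd2 h1 h2
      rw [hbit] at h1 h2
      omega
    · intro i h1 h2 h3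
      rw [hbit] at h1 h2
      omega
  have hflip : flipset p w = {q} := by
    ext i
    rw [mem_flipset, wordOf_length]
    simp only [Finset.mem_singleton]
    constructor
    · rintro ⟨hi, hn2⟩
      by_contra hne
      have h0 : bit w i = false := by
        rcases Bool.eq_false_or_eq_true (bit w i) with h | h
        · rw [hbit] at h; omega
        · exact h
      have hq1 : bit w q = true := (hbit q).2 ⟨rfl, hqn⟩
      rcases lt_or_gt_of_ne hne with hlt | hgt
      · exact not_nice_close (d := q - i) (by rw [wordOf_length]; exact hi) h0 hq1
          (Or.inl (by omega)) (by omega) (by omega) hn2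
      · exact not_nice_close (d := i - q) (by rw [wordOf_length]; exact hi) h0 hq1
          (Or.inr (by omega)) (by omega) (by have := hright i hi hgt; omega) hn2
    · rintro rfl
      exact ⟨hqn, nice_flip_one hnice ((hbit q).2 ⟨rfl, hqn⟩)⟩
  refine ⟨⟨w, by rw [wordOf_length], (ocode_iff_nice p hp w).2 hnice⟩, ?_⟩
  refine (deg_eq_flipset p n hp _).trans ?_
  simp only
  rw [hflip, Finset.card_singleton]


lemma big_exists (p n : ℕ) (hp : 2 ≤ p) (hbig : 2 * p ≤ n) :
    ∃ v : OVert p 2 n, deg (OGraph p 2 n) v = n / (2 * p) + 1 := by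
  have hp0 : 0 < p := by omega
  set m := n / (2 * p) with hm
  set t := n % (2 * p) with ht
  have hmt : 2 * p * m + t = n := Nat.div_add_mod n (2 * p)
  have htlt : t < 2 * p := Nat.mod_lt _ (by omega)
  have hm1 : 1 ≤ m := (Nat.le_div_iff_mul_le (by omega)).2 (by omega)
  set d := if t < p then p else 2 * p with hd
  have hdd : (t < p ∧ d = p) ∨ (p ≤ t ∧ d = 2 * p) := by
    rcases lt_or_ge t p with h | h
    · left; exact ⟨h, if_pos h⟩
    · right; exact ⟨h, if_neg (by omega)⟩
  have hdge : p ≤ d ∧ d ≤ 2 * p := by rcases hdd with ⟨_, h⟩ | ⟨_, h⟩ <;> omega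
  set S : Finset ℕ := insert (p - 1) ((Finset.range m).image (fun j => p - 1 + d + 2 * p * j))
    with hS
  have hmem : ∀ i, i ∈ S ↔ i = p - 1 ∨ ∃ j, j < m ∧ i = p - 1 + d + 2 * p * j := by
    intro i
    simp only [hS, Finset.mem_insert, Finset.mem_image, Finset.mem_range]
    constructor
    · rintro (h | ⟨j, hj, hje⟩)
      · exact Or.inl h
      · exact Or.inr ⟨j, hj, hje.symm⟩
    · rintro (h | ⟨j, hj, hje⟩)
      · exact Or.inl h
      · exact Or.inr ⟨j, hj, hje.symm⟩
  have hgap : ∀ j1 j2 : ℕ, j1 = j2 ∨ 2 * p * j1 + 2 * p ≤ 2 * p * j2 ∨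
      2 * p * j2 + 2 * p ≤ 2 * p * j1 := by
    intro j1 j2
    rcases lt_trichotomy j1 j2 with h | h | h
    · right; left
      have := Nat.mul_le_mul_left (2 * p) (show j1 + 1 ≤ j2 from h)
      rwa [Nat.mul_succ] at this
    · exact Or.inl h
    · right; right
      have := Nat.mul_le_mul_left (2 * p) (show j2 + 1 ≤ j1 from h)
      rwa [Nat.mul_succ] at this
  have hjm : ∀ j, j < m → 2 * p * j + 2 * p ≤ 2 * p * m := by
    intro j h
    have := Nat.mul_le_mul_left (2 * p) (show j + 1 ≤ m from h)
    rwa [Nat.mul_succ] at this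
  have hlt_n : ∀ j, j < m → p - 1 + d + 2 * p * j < n := by
    intro j h
    have := hjm j h
    rcases hdd with ⟨h1, h2⟩ | ⟨h1, h2⟩ <;> omega
  set w := wordOf n S with hwdef
  have hwl : w.length = n := wordOf_length n S
  have hbit : ∀ i, bit w i = true ↔ i ∈ S ∧ i < n := fun i => bit_wordOf_iff
  have honeq : bit w (p - 1) = true := (hbit _).2 ⟨(hmem _).2 (Or.inl rfl), by omega⟩
  have honea : ∀ j, j < m → bit w (p - 1 + d + 2 * p * j) = true := fun j h =>
    (hbit _).2 ⟨(hmem _).2 (Or.inr ⟨j, h, rfl⟩), hlt_n j h⟩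
  have hone_char : ∀ x, bit w x = true → x = p - 1 ∨ ∃ j, j < m ∧ x = p - 1 + d + 2 * p * j :=
    fun x hx => (hmem x).1 ((hbit x).1 hx).1
  have hnice : Nice p w := by
    constructor
    · intro i dd hd1 hd2 h1 h2
      rcases hone_char _ h1 with he1 | ⟨j1, hj1, he1⟩
      · rcases hone_char _ h2 with he2 | ⟨j2, hj2, he2⟩
        · omega
        · omega
      · rcases hone_char _ h2 with he2 | ⟨j2, hj2, he2⟩
        · omega
        · rcases hgap j1 j2 with h | h | h
          · subst h; omega
          · omega
          · omega
    · intro x h1 h2 h3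
      rcases hone_char _ h1 with he1 | ⟨j1, hj1, he1⟩
      · rcases hone_char _ h2 with he2 | ⟨j2, hj2, he2⟩
        · omega
        · rcases hone_char _ h3 with he3 | ⟨j3, hj3, he3⟩
          · omega
          · rcases hgap j2 j3 with h | h | h
            · subst h; omega
            · omega
            · omega
      · rcases hone_char _ h2 with he2 | ⟨j2, hj2, he2⟩
        · omega
        · rcases hgap j1 j2 with h | h | h
          · subst h; omega
          · omega
          · omega
  have hflip : flipset p w = S := by
    ext i
    rw [mem_flipset, hwl]
    constructor
    · rintro ⟨hin, hnn⟩
      by_contra hns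
      have h0 : bit w i = false := by
        rcases Bool.eq_false_or_eq_true (bit w i) with h | h
        · exact absurd ((hbit i).1 h).1 hns
        · exact h
      have hiw : i < w.length := by rw [hwl]; exact hin
      have hns' : ¬(i = p - 1 ∨ ∃ j, j < m ∧ i = p - 1 + d + 2 * p * j) :=
        fun h => hns ((hmem i).2 h)
      push_neg at hns'
      obtain ⟨hne1, hne2⟩ := hns'
      rcases lt_or_gt_of_ne hne1 with hlt | hgt
      · exact not_nice_close (d := p - 1 - i) hiw h0 honeq (Or.inl (by omega))
          (by omega) (by omega) hnn
      · rcases lt_or_ge i (p - 1 + d) with hlt2 | hge2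
        · -- i in the first gap
          rcases lt_or_ge (i - (p - 1)) p with hcl | hcr
          · exact not_nice_close (d := i - (p - 1)) hiw h0 honeq (Or.inr (by omega))
              (by omega) (by omega) hnn
          · have hd2 : d = 2 * p := by rcases hdd with ⟨h1, h2⟩ | ⟨h1, h2⟩ <;> omega
            have hone0 : bit w (p - 1 + d + 2 * p * 0) = true := honea 0 (by omega)
            rcases eq_or_lt_of_le hcr with heq | hgt2
            · refine not_nice_triple (x := p - 1) hiw h0 hp0
                (Or.inr (Or.inl ⟨by omega, honeq, ?_⟩)) hnn
              rw [show i + p = p - 1 + d + 2 * p * 0 by omega]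
              exact hone0
            · exact not_nice_close (d := p - 1 + d - i) hiw h0 hone0 (Or.inl (by omega))
                (by omega) (by omega) hnn
        · -- i beyond the first image element
          set e := i - (p - 1 + d) with hedef
          have hie : i = p - 1 + d + e := by omega
          set j := e / (2 * p) with hjdef
          set r := e % (2 * p) with hrdef
          have hdm : 2 * p * j + r = e := Nat.div_add_mod e (2 * p)
          have hrlt : r < 2 * p := Nat.mod_lt _ (by omega)
          have helt : e < 2 * p * m := by rcases hdd with ⟨h1, h2⟩ | ⟨h1, h2⟩ <;> omega
          have hjm' : j < m := Nat.lt_of_mul_lt_mul_left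
            (show 2 * p * j < 2 * p * m by omega)
          have haj : bit w (p - 1 + d + 2 * p * j) = true := honea j hjm'
          have hr0 : r ≠ 0 := fun h => hne2 j hjm' (by omega)
          have hjm1 : 2 * p * (m - 1) + 2 * p = 2 * p * m := by
            rw [← Nat.mul_succ]
            congr 1
            omega
          rcases lt_or_ge r p with hrp | hrp2
          · exact not_nice_close (d := r) hiw h0 haj (Or.inr (by omega))
              (by omega) (by omega) hnn
          · have hmul : 2 * p * (j + 1) = 2 * p * j + 2 * p := Nat.mul_succ (2 * p) j
            have hj1m : j + 1 < m := by
              by_contra hcon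
              have hj1 : j = m - 1 := by omega
              rw [hj1] at hdm
              rcases hdd with ⟨h1, h2⟩ | ⟨h1, h2⟩ <;> omega
            have haj1 : bit w (p - 1 + d + 2 * p * (j + 1)) = true := honea (j + 1) hj1m
            rcases eq_or_lt_of_le hrp2 with hreq | hrgt
            · refine not_nice_triple (x := p - 1 + d + 2 * p * j) hiw h0 hp0
                (Or.inr (Or.inl ⟨by omega, haj, ?_⟩)) hnn
              rw [show i + p = p - 1 + d + 2 * p * (j + 1) by omega]
              exact haj1
            · exact not_nice_close (d := 2 * p - r) hiw h0 haj1 (Or.inl (by omega))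
                (by omega) (by omega) hnn
    · intro hiS
      have hin : i < n := by
        rcases (hmem i).1 hiS with rfl | ⟨j, hj, rfl⟩
        · omega
        · exact hlt_n j hj
      exact ⟨hin, nice_flip_one hnice ((hbit i).2 ⟨hiS, hin⟩)⟩
  have hninj : Function.Injective (fun j : ℕ => p - 1 + d + 2 * p * j) := by
    intro j1 j2 h
    simp only at h
    exact Nat.eq_of_mul_eq_mul_left (show 0 < 2 * p by omega)
      (show 2 * p * j1 = 2 * p * j2 by omega)
  have hnotmem : p - 1 ∉ (Finset.range m).image (fun j => p - 1 + d + 2 * p * j) := by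
    simp only [Finset.mem_image, Finset.mem_range]
    rintro ⟨j, hj, hjeq⟩
    omega
  have hcard : S.card = m + 1 := by
    rw [hS, Finset.card_insert_of_notMem hnotmem,
      Finset.card_image_of_injective _ hninj, Finset.card_range]
  refine ⟨⟨w, hwl, (ocode_iff_nice p hp w).2 hnice⟩, ?_⟩
  refine (deg_eq_flipset p n hp _).trans ?_
  simp only
  rw [hflip, hcard]

/-- for `p ≥ 2`, `δ(OΓ_n^{(p,2)}) = 1` if `n ≤ 2p−1` and
`δ(OΓ_n^{(p,2)}) = ⌊n/(2p)⌋ + 1` if `n ≥ 2p`. -/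
theorem OGraph_min_degree_r_two (p n : ℕ) (hp : 2 ≤ p) (hn : 1 ≤ n) :
    (n ≤ 2 * p - 1 →
      (∀ v : OVert p 2 n, 1 ≤ deg (OGraph p 2 n) v) ∧
      (∃ v : OVert p 2 n, deg (OGraph p 2 n) v = 1)) ∧
    (2 * p ≤ n →
      (∀ v : OVert p 2 n, n / (2 * p) + 1 ≤ deg (OGraph p 2 n) v) ∧
      (∃ v : OVert p 2 n, deg (OGraph p 2 n) v = n / (2 * p) + 1)) := by
  constructor
  · intro hsmall
    constructor
    · intro v
      have h := lower_main p hp n v.1 v.2.1 hn ((ocode_iff_nice p hp v.1).1 v.2.2)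
      rw [deg_eq_flipset p n hp v]
      have h0 : n / (2 * p) = 0 := Nat.div_eq_of_lt (by omega)
      omega
    · exact small_exists p n hp hn hsmall
  · intro hbig
    constructor
    · intro v
      have h := lower_main p hp n v.1 v.2.1 hn ((ocode_iff_nice p hp v.1).1 v.2.2)
      rw [deg_eq_flipset p n hp v]
      exact h
    · exact big_exists p n hp hbig
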